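/- arXiv:2102.08124 — 3 statements merged into one kernel-verified Lean document; each statement's English description precedes it below -/
import Mathlib

section
/- Let P be the edge set output by the greedy 2-approximation algorithm (Algorithm 1), let W(P) be its total weight, and let W* be the minimum total weight of an exact pruning set. Then W(P) ≤ 2·W*, i.e., the greedy algorithm is a 2-approximation for the minimum-weight exact pruning problem. -/
/-!
Setting: the complete bipartite graph `K_{M,M}`.  An edge is a pair
`(u, v) : Fin M × Fin M` joining left vertex `u` with right vertex `v`.
Edge weights are `w (u, v) = |W u v|` for an `M × M` real matrix `W`.
-/

/-- Number of edges of `P` incident to the left vertex `u`. -/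
def degL {M : ℕ} (P : Finset (Fin M × Fin M)) (u : Fin M) : ℕ :=
  (P.filter fun e => e.1 = u).card

/-- Number of edges of `P` incident to the right vertex `v`. -/
def degR {M : ℕ} (P : Finset (Fin M × Fin M)) (v : Fin M) : ℕ :=
  (P.filter fun e => e.2 = v).card

/-- One step of the greedy algorithm: add the edge `e = (u, v)` to the current set `P`
iff `u` is incident to fewer than `k` edges of `P` or `v` is incident to fewer than `k`
edges of `P`. -/
def greedyStep {M : ℕ} (k : ℕ) (P : Finset (Fin M × Fin M)) (e : Fin M × Fin M) :
    Finset (Fin M × Fin M) :=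
  if degL P e.1 < k ∨ degR P e.2 < k then insert e P else P

/-- The greedy 2-approximation algorithm (Algorithm 1): process the edges in the order
given by the list `L`, starting from `∅`. -/
def greedy {M : ℕ} (k : ℕ) (L : List (Fin M × Fin M)) : Finset (Fin M × Fin M) :=
  L.foldl (greedyStep k) ∅

/-- An exact pruning set: every left vertex and every right vertex is incident to
exactly `k` of its edges. -/
def IsExactPruning {M : ℕ} (k : ℕ) (Q : Finset (Fin M × Fin M)) : Prop :=
  (∀ u : Fin M, degL Q u = k) ∧ (∀ v : Fin M, degR Q v = k)

namespace Greedy2Approx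

variable {M : ℕ}

lemma degL_mono {P P' : Finset (Fin M × Fin M)} (h : P ⊆ P') (u : Fin M) :
    degL P u ≤ degL P' u :=
  Finset.card_le_card (Finset.filter_subset_filter _ h)

lemma degR_mono {P P' : Finset (Fin M × Fin M)} (h : P ⊆ P') (v : Fin M) :
    degR P v ≤ degR P' v :=
  Finset.card_le_card (Finset.filter_subset_filter _ h)

lemma subset_greedyStep (k : ℕ) (P : Finset (Fin M × Fin M)) (e : Fin M × Fin M) :
    P ⊆ greedyStep k P e := by
  unfold greedyStep; split
  · exact Finset.subset_insert _ _
  · exact subset_rfl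

lemma subset_foldl (k : ℕ) (P : Finset (Fin M × Fin M)) (l : List (Fin M × Fin M)) :
    P ⊆ l.foldl (greedyStep k) P := by
  induction l generalizing P with
  | nil => exact subset_rfl
  | cons e l ih => exact (subset_greedyStep k P e).trans (ih _)

lemma mem_of_mem_foldl {k : ℕ} {P : Finset (Fin M × Fin M)} {l : List (Fin M × Fin M)}
    {x : Fin M × Fin M} (h : x ∈ l.foldl (greedyStep k) P) : x ∈ P ∨ x ∈ l := by
  induction l generalizing P with
  | nil => exact Or.inl h
  | cons e l ih =>
    rcases ih (by simpa using h) with h' | h'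
    · unfold greedyStep at h'
      split at h'
      · rcases Finset.mem_insert.1 h' with rfl | h''
        · exact Or.inr (List.mem_cons_self)
        · exact Or.inl h''
      · exact Or.inl h'
    · exact Or.inr (List.mem_cons_of_mem _ h')

/-- The greedy state after processing the first `n` edges of `L`. -/
def Pg (k : ℕ) (L : List (Fin M × Fin M)) (n : ℕ) : Finset (Fin M × Fin M) :=
  greedy k (L.take n)

lemma Pg_mono (k : ℕ) (L : List (Fin M × Fin M)) {m n : ℕ} (h : m ≤ n) :
    Pg k L m ⊆ Pg k L n := by
  have hsplit : L.take n = L.take m ++ (L.drop m).take (n - m) := by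
    rw [← List.take_add]; congr 1; omega
  rw [Pg, Pg, hsplit, greedy, greedy, List.foldl_append]
  exact subset_foldl _ _ _

lemma Pg_succ (k : ℕ) (L : List (Fin M × Fin M)) {n : ℕ} (h : n < L.length) :
    Pg k L (n + 1) = greedyStep k (Pg k L n) (L.get ⟨n, h⟩) := by
  have htake : L.take (n + 1) = L.take n ++ [L.get ⟨n, h⟩] := by
    rw [List.take_succ]
    simp [List.getElem?_eq_getElem h]
  rw [Pg, Pg, htake, greedy, greedy, List.foldl_append]
  rfl

lemma mem_take_of_mem_Pg {k n : ℕ} {L : List (Fin M × Fin M)} {x : Fin M × Fin M}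
    (h : x ∈ Pg k L n) : x ∈ L.take n :=
  (mem_of_mem_foldl h).resolve_left (by simp)

lemma greedy_subset {k : ℕ} {L : List (Fin M × Fin M)} {x : Fin M × Fin M}
    (h : x ∈ greedy k L) : x ∈ L :=
  (mem_of_mem_foldl h).resolve_left (by simp)

section Main

variable {k : ℕ} {L : List (Fin M × Fin M)}

/-- Position of an edge in the list `L`. -/
def idx (L : List (Fin M × Fin M)) (e : Fin M × Fin M) : ℕ :=
  @List.idxOf _ instBEqOfDecidableEq e L

lemma idx_lt_length {e : Fin M × Fin M} (he : e ∈ L) : idx L e < L.length :=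
  (@List.idxOf_lt_length_iff _ instBEqOfDecidableEq _ _ _).2 he

lemma getElem_idx {e : Fin M × Fin M} (he : e ∈ L) :
    L[idx L e]'(idx_lt_length he) = e :=
  @List.getElem_idxOf _ instBEqOfDecidableEq _ _ _ _

lemma self_mem_drop_idx {e : Fin M × Fin M} (he : e ∈ L) :
    e ∈ L.drop (idx L e) := by
  rw [List.drop_eq_getElem_cons (idx_lt_length he), getElem_idx he]
  exact List.mem_cons_self

lemma self_mem_take_idx_succ {e : Fin M × Fin M} (he : e ∈ L) :
    e ∈ L.take (idx L e + 1) := by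
  have h : idx L e < L.length := idx_lt_length he
  rw [List.take_succ]
  simp only [List.getElem?_eq_getElem h]
  rw [getElem_idx he]
  exact List.mem_append_right _ (List.mem_singleton_self e)

lemma disjoint_take_drop (hnodup : L.Nodup) (n : ℕ) :
    (L.take n).Disjoint (L.drop n) := by
  have : (L.take n ++ L.drop n).Nodup := by rw [List.take_append_drop]; exact hnodup
  exact fun _ ha hb => (List.nodup_append.1 this).2.2 _ ha _ hb rfl

lemma not_mem_Pg_idx (hnodup : L.Nodup) {e : Fin M × Fin M} (he : e ∈ L) :
    e ∉ Pg k L (idx L e) := fun h =>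
  disjoint_take_drop hnodup (idx L e) (mem_take_of_mem_Pg h) (self_mem_drop_idx he)

lemma idx_lt_of_mem_take (hnodup : L.Nodup) {f : Fin M × Fin M} {n : ℕ}
    (hf : f ∈ L.take n) : idx L f < n := by
  by_contra hcon
  push_neg at hcon
  have hfL : f ∈ L := List.mem_of_mem_take hf
  have hdrop : f ∈ L.drop n := by
    have h1 : f ∈ L.drop (idx L f) := self_mem_drop_idx hfL
    have h2 : L.drop (idx L f) = (L.drop n).drop (idx L f - n) := by
      rw [List.drop_drop]; congr 1; omega
    rw [h2] at h1
    exact List.mem_of_mem_drop h1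
  exact disjoint_take_drop hnodup n hf hdrop


lemma mem_Pg_idx_succ (hnodup : L.Nodup) {e : Fin M × Fin M} (he : e ∈ greedy k L) :
    e ∈ Pg k L (idx L e + 1) := by
  have heL : e ∈ L := greedy_subset he
  have hfold : e ∈ (L.drop (idx L e + 1)).foldl (greedyStep k) (Pg k L (idx L e + 1)) := by
    have hL : L.take (idx L e + 1) ++ L.drop (idx L e + 1) = L := List.take_append_drop _ _
    rw [Pg, greedy, ← List.foldl_append, hL]
    exact he
  rcases mem_of_mem_foldl hfold with h | h
  · exact h
  · exact absurd h (fun h => disjoint_take_drop hnodup _ (self_mem_take_idx_succ heL) h)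

lemma cond_of_mem_greedy (hnodup : L.Nodup) {e : Fin M × Fin M} (he : e ∈ greedy k L) :
    degL (Pg k L (idx L e)) e.1 < k ∨ degR (Pg k L (idx L e)) e.2 < k := by
  have heL : e ∈ L := greedy_subset he
  by_contra hcon
  have hPg : e ∈ Pg k L (idx L e + 1) := mem_Pg_idx_succ hnodup he
  rw [Pg_succ k L (idx_lt_length heL)] at hPg
  have hg : L.get ⟨idx L e, idx_lt_length heL⟩ = e := getElem_idx heL
  rw [hg, greedyStep, if_neg hcon] at hPg
  exact not_mem_Pg_idx hnodup heL hPg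

lemma w_le_of_mem_drop {w : Fin M × Fin M → ℝ} (hsorted : L.Pairwise fun a b => w a ≤ w b)
    {e g : Fin M × Fin M} (he : e ∈ L) (hg : g ∈ L.drop (idx L e)) : w e ≤ w g := by
  rw [List.drop_eq_getElem_cons (idx_lt_length he), getElem_idx he] at hg
  rcases List.mem_cons.1 hg with rfl | hg'
  · exact le_refl _
  · have hs : (e :: L.drop (idx L e + 1)).Pairwise fun a b => w a ≤ w b := by
      have h1 := hsorted.sublist (List.drop_sublist (idx L e) L)
      rwa [List.drop_eq_getElem_cons (idx_lt_length he), getElem_idx he] at h1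
    exact List.rel_of_pairwise_cons hs hg'

section WithQ

variable {Q : Finset (Fin M × Fin M)}

lemma length_filterQL (hnodup : L.Nodup) (hcomplete : ∀ e : Fin M × Fin M, e ∈ L)
    {u : Fin M} (hdeg : degL Q u = k) :
    (L.filter (fun f => decide (f ∈ Q ∧ f.1 = u))).length = k := by
  classical
  rw [← List.toFinset_card_of_nodup (hnodup.filter _), List.toFinset_filter]
  have huniv : L.toFinset = Finset.univ :=
    Finset.eq_univ_iff_forall.2 fun e => List.mem_toFinset.2 (hcomplete e)
  rw [huniv, ← hdeg, degL]
  congr 1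
  ext f
  simp [Finset.mem_filter, and_comm]

lemma length_filterQR (hnodup : L.Nodup) (hcomplete : ∀ e : Fin M × Fin M, e ∈ L)
    {v : Fin M} (hdeg : degR Q v = k) :
    (L.filter (fun f => decide (f ∈ Q ∧ f.2 = v))).length = k := by
  classical
  rw [← List.toFinset_card_of_nodup (hnodup.filter _), List.toFinset_filter]
  have huniv : L.toFinset = Finset.univ :=
    Finset.eq_univ_iff_forall.2 fun e => List.mem_toFinset.2 (hcomplete e)
  rw [huniv, ← hdeg, degR]
  congr 1
  ext f
  simp [Finset.mem_filter, and_comm]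

lemma core_left (hnodup : L.Nodup) {e : Fin M × Fin M} (he : e ∈ L)
    (h : degL (Pg k L (idx L e)) e.1 < k)
    (hlen : degL (Pg k L (idx L e)) e.1
      < (L.filter (fun f => decide (f ∈ Q ∧ f.1 = e.1))).length) :
    (L.filter (fun f => decide (f ∈ Q ∧ f.1 = e.1))).get
      ⟨degL (Pg k L (idx L e)) e.1, hlen⟩ ∈ L.drop (idx L e) := by
  classical
  set n := idx L e with hn
  set u := e.1 with hu
  set j := degL (Pg k L n) u with hj
  set p : Fin M × Fin M → Bool := fun f => decide (f ∈ Q ∧ f.1 = u) with hp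
  have hsplit : L.filter p = (L.take n).filter p ++ (L.drop n).filter p := by
    rw [← List.filter_append, List.take_append_drop]
  have hsub : ((L.take n).filter p).toFinset ⊆ (Pg k L n).filter (fun f => f.1 = u) := by
    intro f hf
    rw [List.mem_toFinset, List.mem_filter] at hf
    obtain ⟨hf1, hf2⟩ := hf
    have hfp : f ∈ Q ∧ f.1 = u := by simpa [hp] using hf2
    have hfL : f ∈ L := List.mem_of_mem_take hf1
    have hm : idx L f < n := idx_lt_of_mem_take hnodup hf1
    have hdm : degL (Pg k L (idx L f)) u ≤ j := degL_mono (Pg_mono k L hm.le) u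
    have hstep : f ∈ Pg k L (idx L f + 1) := by
      rw [Pg_succ k L (idx_lt_length hfL)]
      have hgf : L.get ⟨idx L f, idx_lt_length hfL⟩ = f := getElem_idx hfL
      rw [hgf, greedyStep, if_pos (Or.inl (by rw [hfp.2]; omega))]
      exact Finset.mem_insert_self _ _
    exact Finset.mem_filter.2 ⟨Pg_mono k L (by omega) hstep, hfp.2⟩
  have hA : ((L.take n).filter p).length ≤ j := by
    have hnd : ((L.take n).filter p).Nodup :=
      (hnodup.sublist (List.take_sublist _ _)).filter _
    calc ((L.take n).filter p).length = ((L.take n).filter p).toFinset.card :=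
          (List.toFinset_card_of_nodup hnd).symm
      _ ≤ ((Pg k L n).filter (fun f => f.1 = u)).card := Finset.card_le_card hsub
      _ = j := rfl
  have hgetmem : (L.filter p).get ⟨j, hlen⟩ ∈ (L.drop n).filter p := by
    have hlen' : j < ((L.take n).filter p ++ (L.drop n).filter p).length := by
      rw [← hsplit]; exact hlen
    rw [List.get_eq_getElem, List.getElem_of_eq hsplit hlen,
      List.getElem_append_right hA]
    exact List.getElem_mem _
  exact List.filter_sublist.subset hgetmem

lemma core_right (hnodup : L.Nodup) {e : Fin M × Fin M} (he : e ∈ L)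
    (h : degR (Pg k L (idx L e)) e.2 < k)
    (hlen : degR (Pg k L (idx L e)) e.2
      < (L.filter (fun f => decide (f ∈ Q ∧ f.2 = e.2))).length) :
    (L.filter (fun f => decide (f ∈ Q ∧ f.2 = e.2))).get
      ⟨degR (Pg k L (idx L e)) e.2, hlen⟩ ∈ L.drop (idx L e) := by
  classical
  set n := idx L e with hn
  set v := e.2 with hv
  set j := degR (Pg k L n) v with hj
  set p : Fin M × Fin M → Bool := fun f => decide (f ∈ Q ∧ f.2 = v) with hp
  have hsplit : L.filter p = (L.take n).filter p ++ (L.drop n).filter p := by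
    rw [← List.filter_append, List.take_append_drop]
  have hsub : ((L.take n).filter p).toFinset ⊆ (Pg k L n).filter (fun f => f.2 = v) := by
    intro f hf
    rw [List.mem_toFinset, List.mem_filter] at hf
    obtain ⟨hf1, hf2⟩ := hf
    have hfp : f ∈ Q ∧ f.2 = v := by simpa [hp] using hf2
    have hfL : f ∈ L := List.mem_of_mem_take hf1
    have hm : idx L f < n := idx_lt_of_mem_take hnodup hf1
    have hdm : degR (Pg k L (idx L f)) v ≤ j := degR_mono (Pg_mono k L hm.le) v
    have hstep : f ∈ Pg k L (idx L f + 1) := by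
      rw [Pg_succ k L (idx_lt_length hfL)]
      have hgf : L.get ⟨idx L f, idx_lt_length hfL⟩ = f := getElem_idx hfL
      rw [hgf, greedyStep, if_pos (Or.inr (by rw [hfp.2]; omega))]
      exact Finset.mem_insert_self _ _
    exact Finset.mem_filter.2 ⟨Pg_mono k L (by omega) hstep, hfp.2⟩
  have hA : ((L.take n).filter p).length ≤ j := by
    have hnd : ((L.take n).filter p).Nodup :=
      (hnodup.sublist (List.take_sublist _ _)).filter _
    calc ((L.take n).filter p).length = ((L.take n).filter p).toFinset.card :=
          (List.toFinset_card_of_nodup hnd).symm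
      _ ≤ ((Pg k L n).filter (fun f => f.2 = v)).card := Finset.card_le_card hsub
      _ = j := rfl
  have hgetmem : (L.filter p).get ⟨j, hlen⟩ ∈ (L.drop n).filter p := by
    have hlen' : j < ((L.take n).filter p ++ (L.drop n).filter p).length := by
      rw [← hsplit]; exact hlen
    rw [List.get_eq_getElem, List.getElem_of_eq hsplit hlen,
      List.getElem_append_right hA]
    exact List.getElem_mem _
  exact List.filter_sublist.subset hgetmem

end WithQ

lemma degL_lt_of_idx_lt (hnodup : L.Nodup) {e e' : Fin M × Fin M}
    (he : e ∈ greedy k L) (he' : e' ∈ L) (hlt : idx L e < idx L e') (hu : e.1 = e'.1) :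
    degL (Pg k L (idx L e)) e.1 < degL (Pg k L (idx L e')) e'.1 := by
  classical
  have heL : e ∈ L := greedy_subset he
  have h2 : e ∈ Pg k L (idx L e') := Pg_mono k L (by omega) (mem_Pg_idx_succ hnodup he)
  have hsub : insert e ((Pg k L (idx L e)).filter (fun f => f.1 = e.1))
      ⊆ (Pg k L (idx L e')).filter (fun f => f.1 = e'.1) := by
    intro f hf
    rcases Finset.mem_insert.1 hf with rfl | hf
    · exact Finset.mem_filter.2 ⟨h2, hu⟩
    · have hff := Finset.mem_filter.1 hf
      exact Finset.mem_filter.2 ⟨Pg_mono k L hlt.le hff.1, hu ▸ hff.2⟩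
  have hni : e ∉ (Pg k L (idx L e)).filter (fun f => f.1 = e.1) :=
    fun hmem => not_mem_Pg_idx hnodup heL (Finset.mem_filter.1 hmem).1
  calc degL (Pg k L (idx L e)) e.1
      < (insert e ((Pg k L (idx L e)).filter (fun f => f.1 = e.1))).card := by
        rw [Finset.card_insert_of_notMem hni]; exact Nat.lt_succ_self _
    _ ≤ ((Pg k L (idx L e')).filter (fun f => f.1 = e'.1)).card := Finset.card_le_card hsub
    _ = degL (Pg k L (idx L e')) e'.1 := rfl

lemma degR_lt_of_idx_lt (hnodup : L.Nodup) {e e' : Fin M × Fin M}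
    (he : e ∈ greedy k L) (he' : e' ∈ L) (hlt : idx L e < idx L e') (hv : e.2 = e'.2) :
    degR (Pg k L (idx L e)) e.2 < degR (Pg k L (idx L e')) e'.2 := by
  classical
  have heL : e ∈ L := greedy_subset he
  have h2 : e ∈ Pg k L (idx L e') := Pg_mono k L (by omega) (mem_Pg_idx_succ hnodup he)
  have hsub : insert e ((Pg k L (idx L e)).filter (fun f => f.2 = e.2))
      ⊆ (Pg k L (idx L e')).filter (fun f => f.2 = e'.2) := by
    intro f hf
    rcases Finset.mem_insert.1 hf with rfl | hf
    · exact Finset.mem_filter.2 ⟨h2, hv⟩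
    · have hff := Finset.mem_filter.1 hf
      exact Finset.mem_filter.2 ⟨Pg_mono k L hlt.le hff.1, hv ▸ hff.2⟩
  have hni : e ∉ (Pg k L (idx L e)).filter (fun f => f.2 = e.2) :=
    fun hmem => not_mem_Pg_idx hnodup heL (Finset.mem_filter.1 hmem).1
  calc degR (Pg k L (idx L e)) e.2
      < (insert e ((Pg k L (idx L e)).filter (fun f => f.2 = e.2))).card := by
        rw [Finset.card_insert_of_notMem hni]; exact Nat.lt_succ_self _
    _ ≤ ((Pg k L (idx L e')).filter (fun f => f.2 = e'.2)).card := Finset.card_le_card hsub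
    _ = degR (Pg k L (idx L e')) e'.2 := rfl



lemma get_val_eq {α : Type*} {l l' : List α} (hl : l = l') (hnd : l.Nodup)
    {i : Fin l.length} {i' : Fin l'.length} (h : l.get i = l'.get i') : i.val = i'.val := by
  subst hl
  exact congrArg Fin.val (List.nodup_iff_injective_get.1 hnd h)

theorem master (k : ℕ) (w : Fin M × Fin M → ℝ) (hw0 : ∀ e, 0 ≤ w e)
    (hnodup : L.Nodup) (hcomplete : ∀ e : Fin M × Fin M, e ∈ L)
    (hsorted : L.Pairwise fun a b => w a ≤ w b)
    (Q : Finset (Fin M × Fin M)) (hQL : ∀ u, degL Q u = k) (hQR : ∀ v, degR Q v = k) :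
    ∑ e ∈ greedy k L, w e ≤ 2 * ∑ e ∈ Q, w e := by
  classical
  set Φ : Fin M × Fin M → (Fin M × Fin M) × Bool := fun e =>
    if degL (Pg k L (idx L e)) e.1 < k then
      ((L.filter (fun f => decide (f ∈ Q ∧ f.1 = e.1))).getD
        (degL (Pg k L (idx L e)) e.1) e, true)
    else
      ((L.filter (fun f => decide (f ∈ Q ∧ f.2 = e.2))).getD
        (degR (Pg k L (idx L e)) e.2) e, false)
    with hΦ
  -- left-branch description
  have hlenL : ∀ e : Fin M × Fin M, degL (Pg k L (idx L e)) e.1 < k →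
      degL (Pg k L (idx L e)) e.1
        < (L.filter (fun f => decide (f ∈ Q ∧ f.1 = e.1))).length := by
    intro e h
    rw [length_filterQL hnodup hcomplete (hQL e.1)]; exact h
  have hlenR : ∀ e : Fin M × Fin M, degR (Pg k L (idx L e)) e.2 < k →
      degR (Pg k L (idx L e)) e.2
        < (L.filter (fun f => decide (f ∈ Q ∧ f.2 = e.2))).length := by
    intro e h
    rw [length_filterQR hnodup hcomplete (hQR e.2)]; exact h
  have hΦL : ∀ (e : Fin M × Fin M) (h : degL (Pg k L (idx L e)) e.1 < k),
      Φ e = ((L.filter (fun f => decide (f ∈ Q ∧ f.1 = e.1))).get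
        ⟨degL (Pg k L (idx L e)) e.1, hlenL e h⟩, true) := by
    intro e h
    simp only [hΦ]
    rw [if_pos h, List.getD_eq_getElem _ _ (hlenL e h)]
    rfl
  have hΦR : ∀ (e : Fin M × Fin M) (h : ¬ degL (Pg k L (idx L e)) e.1 < k)
      (h2 : degR (Pg k L (idx L e)) e.2 < k),
      Φ e = ((L.filter (fun f => decide (f ∈ Q ∧ f.2 = e.2))).get
        ⟨degR (Pg k L (idx L e)) e.2, hlenR e h2⟩, false) := by
    intro e h h2
    simp only [hΦ]
    rw [if_neg h, List.getD_eq_getElem _ _ (hlenR e h2)]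
    rfl
  have hmemL : ∀ (e : Fin M × Fin M) (h : degL (Pg k L (idx L e)) e.1 < k),
      (Φ e).1 ∈ Q ∧ (Φ e).1.1 = e.1 := by
    intro e h
    rw [hΦL e h]
    have hm : (L.filter (fun f => decide (f ∈ Q ∧ f.1 = e.1))).get
        ⟨degL (Pg k L (idx L e)) e.1, hlenL e h⟩
        ∈ L.filter (fun f => decide (f ∈ Q ∧ f.1 = e.1)) := List.get_mem _ _
    have := (List.mem_filter.1 hm).2
    simpa using this
  have hmemR : ∀ (e : Fin M × Fin M) (h : ¬ degL (Pg k L (idx L e)) e.1 < k)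
      (h2 : degR (Pg k L (idx L e)) e.2 < k),
      (Φ e).1 ∈ Q ∧ (Φ e).1.2 = e.2 := by
    intro e h h2
    rw [hΦR e h h2]
    have hm : (L.filter (fun f => decide (f ∈ Q ∧ f.2 = e.2))).get
        ⟨degR (Pg k L (idx L e)) e.2, hlenR e h2⟩
        ∈ L.filter (fun f => decide (f ∈ Q ∧ f.2 = e.2)) := List.get_mem _ _
    have := (List.mem_filter.1 hm).2
    simpa using this
  have hkey : ∀ e ∈ greedy k L, (Φ e).1 ∈ Q ∧ w e ≤ w (Φ e).1 := by
    intro e he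
    have heL : e ∈ L := greedy_subset he
    by_cases h : degL (Pg k L (idx L e)) e.1 < k
    · refine ⟨(hmemL e h).1, ?_⟩
      rw [hΦL e h]
      exact w_le_of_mem_drop hsorted heL (core_left hnodup heL h (hlenL e h))
    · have h2 : degR (Pg k L (idx L e)) e.2 < k :=
        (cond_of_mem_greedy hnodup he).resolve_left h
      refine ⟨(hmemR e h h2).1, ?_⟩
      rw [hΦR e h h2]
      exact w_le_of_mem_drop hsorted heL (core_right hnodup heL h2 (hlenR e h2))
  -- injectivity
  have hidx : ∀ {e e' : Fin M × Fin M}, e ∈ L → e' ∈ L → idx L e = idx L e' → e = e' := by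
    intro e e' he he' h
    have h1 := getElem_idx (L := L) he
    have h2 := getElem_idx (L := L) he'
    rw [← h1, ← h2]
    congr 1
  have hinj : ∀ e ∈ greedy k L, ∀ e' ∈ greedy k L, Φ e = Φ e' → e = e' := by
    intro e he e' he' heq
    have heL : e ∈ L := greedy_subset he
    have heL' : e' ∈ L := greedy_subset he'
    by_cases h : degL (Pg k L (idx L e)) e.1 < k <;>
      by_cases h' : degL (Pg k L (idx L e')) e'.1 < k
    · -- both left
      rw [hΦL e h, hΦL e' h'] at heq
      have hg := congrArg Prod.fst heq
      have hu : e.1 = e'.1 := by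
        have m1 := (hmemL e h).2
        have m2 := (hmemL e' h').2
        rw [hΦL e h] at m1
        rw [hΦL e' h'] at m2
        rw [← m1, ← m2, hg]
      rcases lt_trichotomy (idx L e) (idx L e') with hlt | heqi | hlt
      · exfalso
        have hd := degL_lt_of_idx_lt hnodup he heL' hlt hu
        -- but the two deg values are equal
        have hje : degL (Pg k L (idx L e)) e.1 = degL (Pg k L (idx L e')) e'.1 :=
          get_val_eq (by rw [hu]) (hnodup.filter _) hg
        omega
      · exact hidx heL heL' heqi
      · exfalso
        have hd := degL_lt_of_idx_lt hnodup he' heL hlt hu.symm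
        have hje : degL (Pg k L (idx L e)) e.1 = degL (Pg k L (idx L e')) e'.1 :=
          get_val_eq (by rw [hu]) (hnodup.filter _) hg
        omega
    · exfalso
      have h2' : degR (Pg k L (idx L e')) e'.2 < k :=
        (cond_of_mem_greedy hnodup he').resolve_left h'
      rw [hΦL e h, hΦR e' h' h2'] at heq
      exact Bool.noConfusion (congrArg Prod.snd heq)
    · exfalso
      have h2 : degR (Pg k L (idx L e)) e.2 < k :=
        (cond_of_mem_greedy hnodup he).resolve_left h
      rw [hΦR e h h2, hΦL e' h'] at heq
      exact Bool.noConfusion (congrArg Prod.snd heq)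
    · -- both right
      have h2 : degR (Pg k L (idx L e)) e.2 < k :=
        (cond_of_mem_greedy hnodup he).resolve_left h
      have h2' : degR (Pg k L (idx L e')) e'.2 < k :=
        (cond_of_mem_greedy hnodup he').resolve_left h'
      rw [hΦR e h h2, hΦR e' h' h2'] at heq
      have hg := congrArg Prod.fst heq
      have hv : e.2 = e'.2 := by
        have m1 := (hmemR e h h2).2
        have m2 := (hmemR e' h' h2').2
        rw [hΦR e h h2] at m1
        rw [hΦR e' h' h2'] at m2
        rw [← m1, ← m2, hg]
      rcases lt_trichotomy (idx L e) (idx L e') with hlt | heqi | hlt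
      · exfalso
        have hd := degR_lt_of_idx_lt hnodup he heL' hlt hv
        have hje : degR (Pg k L (idx L e)) e.2 = degR (Pg k L (idx L e')) e'.2 :=
          get_val_eq (by rw [hv]) (hnodup.filter _) hg
        omega
      · exact hidx heL heL' heqi
      · exfalso
        have hd := degR_lt_of_idx_lt hnodup he' heL hlt hv.symm
        have hje : degR (Pg k L (idx L e)) e.2 = degR (Pg k L (idx L e')) e'.2 :=
          get_val_eq (by rw [hv]) (hnodup.filter _) hg
        omega
  -- the sum chain
  have himg : (greedy k L).image Φ ⊆ Q ×ˢ (Finset.univ : Finset Bool) := by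
    intro p hp
    obtain ⟨e, he, rfl⟩ := Finset.mem_image.1 hp
    exact Finset.mem_product.2 ⟨(hkey e he).1, Finset.mem_univ _⟩
  calc ∑ e ∈ greedy k L, w e
      ≤ ∑ e ∈ greedy k L, w ((Φ e).1) :=
        Finset.sum_le_sum (fun e he => (hkey e he).2)
    _ = ∑ p ∈ (greedy k L).image Φ, w p.1 := by rw [Finset.sum_image hinj]
    _ ≤ ∑ p ∈ Q ×ˢ (Finset.univ : Finset Bool), w p.1 :=
        Finset.sum_le_sum_of_subset_of_nonneg himg (fun p _ _ => hw0 p.1)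
    _ = 2 * ∑ e ∈ Q, w e := by
        rw [Finset.sum_product, Finset.mul_sum]
        apply Finset.sum_congr rfl
        intro x _
        simp [two_mul]

end Main

end Greedy2Approx

/-- The greedy algorithm (with per-vertex requirement `M / 2`, run on an
enumeration `L` of all edges of `K_{M,M}` in nondecreasing order of weight) outputs an edge
set `P` whose total weight `W(P)` satisfies `W(P) ≤ 2 · W*`, where `W*` is the minimum
total weight of an exact pruning set; equivalently, `W(P) ≤ 2 · W(Q)` for every exact
pruning set `Q`. -/
theorem greedy_two_approximation (M : ℕ) (hM : 0 < M) (hMeven : Even M)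
    (W : Matrix (Fin M) (Fin M) ℝ) (w : Fin M × Fin M → ℝ)
    (hw : ∀ e : Fin M × Fin M, w e = |W e.1 e.2|)
    (L : List (Fin M × Fin M)) (hnodup : L.Nodup)
    (hcomplete : ∀ e : Fin M × Fin M, e ∈ L)
    (hsorted : L.Pairwise fun a b => w a ≤ w b)
    (Q : Finset (Fin M × Fin M)) (hQ : IsExactPruning (M / 2) Q) :
    ∑ e ∈ greedy (M / 2) L, w e ≤ 2 * ∑ e ∈ Q, w e := by
  classical
  exact Greedy2Approx.master (M / 2) w
    (fun e => by rw [hw e]; exact abs_nonneg _)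
    hnodup hcomplete hsorted Q hQ.1 hQ.2
end

section
/- Fix any vertex i of K_{M,M} and any exact pruning set Q. Let e'_1,…,e'_{M/2} be the edges of Q incident to i, sorted in nondecreasing order of weight, and let e_1,…,e_{M/2} be the first M/2 edges incident to i that the greedy 2-approximation algorithm (Algorithm 1) adds to P, listed in the order in which the algorithm adds them (this order is nondecreasing in weight). Then for every n with 1 ≤ n ≤ M/2, it holds that w(e_n) ≤ w(e'_n). -/
/-- A vertex of `K_{M,M}`: either a left vertex `Sum.inl u` or a right vertex `Sum.inr v`. -/
def Inc {M : ℕ} : (Fin M ⊕ Fin M) → (Fin M × Fin M) → Prop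
  | Sum.inl u, e => e.1 = u
  | Sum.inr v, e => e.2 = v

instance {M : ℕ} (x : Fin M ⊕ Fin M) (e : Fin M × Fin M) : Decidable (Inc x e) := by
  cases x
  · exact inferInstanceAs (Decidable (e.1 = _))
  · exact inferInstanceAs (Decidable (e.2 = _))

/-- The edges added to `P` by the greedy algorithm, listed in the order in which the
algorithm adds them (i.e. in the order of the enumeration `L`). -/
def addedList {M : ℕ} (k : ℕ) (L : List (Fin M × Fin M)) : List (Fin M × Fin M) :=
  L.filter fun e => decide (e ∈ greedy k L)

/-- `E(x)`: the first `k` edges incident to the vertex `x` that the greedy algorithm adds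
to `P`, in order of addition. -/
def firstEdges {M : ℕ} (k : ℕ) (L : List (Fin M × Fin M)) (x : Fin M ⊕ Fin M) :
    List (Fin M × Fin M) :=
  ((addedList k L).filter fun e => decide (Inc x e)).take k

section GreedyAux

open List Finset

variable {M k : ℕ}

/-- Degree of an arbitrary vertex (left or right). -/
def degI {M : ℕ} (P : Finset (Fin M × Fin M)) (i : Fin M ⊕ Fin M) : ℕ :=
  (P.filter fun e => Inc i e).card

lemma degI_inl (P : Finset (Fin M × Fin M)) (u : Fin M) : degI P (Sum.inl u) = degL P u := by
  rfl

lemma degI_inr (P : Finset (Fin M × Fin M)) (v : Fin M) : degI P (Sum.inr v) = degR P v := by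
  rfl

lemma subset_greedyStep (P : Finset (Fin M × Fin M)) (e : Fin M × Fin M) :
    P ⊆ greedyStep k P e := by
  unfold greedyStep
  split
  · exact Finset.subset_insert _ _
  · exact Finset.Subset.refl _

lemma greedyStep_subset_insert (P : Finset (Fin M × Fin M)) (e : Fin M × Fin M) :
    greedyStep k P e ⊆ insert e P := by
  unfold greedyStep
  split
  · exact Finset.Subset.refl _
  · exact Finset.subset_insert _ _

lemma subset_foldl (P : Finset (Fin M × Fin M)) (L : List (Fin M × Fin M)) :
    P ⊆ L.foldl (greedyStep k) P := by
  induction L generalizing P with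
  | nil => exact Finset.Subset.refl _
  | cons a t ih => exact (subset_greedyStep P a).trans (ih _)

lemma foldl_subset_union (P : Finset (Fin M × Fin M)) (L : List (Fin M × Fin M)) :
    L.foldl (greedyStep k) P ⊆ P ∪ L.toFinset := by
  induction L generalizing P with
  | nil => simp
  | cons a t ih =>
      intro x hx
      simp only [List.foldl_cons] at hx
      rcases Finset.mem_union.1 (ih (greedyStep k P a) hx) with hx | hx
      · rcases Finset.mem_insert.1 (greedyStep_subset_insert P a hx) with rfl | hx
        · simp
        · exact Finset.mem_union_left _ hx
      · simp only [List.toFinset_cons]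
        exact Finset.mem_union_right _ (Finset.mem_insert_of_mem hx)

lemma greedy_append (L1 L2 : List (Fin M × Fin M)) :
    greedy k (L1 ++ L2) = L2.foldl (greedyStep k) (greedy k L1) := by
  unfold greedy
  rw [List.foldl_append]

lemma greedy_prefix_subset (L1 L2 : List (Fin M × Fin M)) :
    greedy k L1 ⊆ greedy k (L1 ++ L2) := by
  rw [greedy_append]
  exact subset_foldl _ _

lemma mem_greedy_prefix_iff {L1 L2 : List (Fin M × Fin M)} (hnd : (L1 ++ L2).Nodup)
    {x : Fin M × Fin M} :
    x ∈ greedy k L1 ↔ x ∈ L1 ∧ x ∈ greedy k (L1 ++ L2) := by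
  constructor
  · intro h
    refine ⟨?_, greedy_prefix_subset L1 L2 h⟩
    have h2 := foldl_subset_union (k := k) ∅ L1 h
    simpa using h2
  · rintro ⟨h1, h2⟩
    rw [greedy_append] at h2
    rcases Finset.mem_union.1 (foldl_subset_union _ _ h2) with h | h
    · exact h
    · exact absurd h1 (fun h1 => (List.disjoint_of_nodup_append hnd) h1 (List.mem_toFinset.1 h))

lemma degI_mono {P P' : Finset (Fin M × Fin M)} (h : P ⊆ P') (i : Fin M ⊕ Fin M) :
    degI P i ≤ degI P' i :=
  Finset.card_le_card (Finset.filter_subset_filter _ h)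

lemma mem_greedyStep_self {P : Finset (Fin M × Fin M)} {e : Fin M × Fin M}
    {i : Fin M ⊕ Fin M} (hi : Inc i e) (hd : degI P i < k) :
    e ∈ greedyStep k P e := by
  unfold greedyStep
  rw [if_pos]
  · exact Finset.mem_insert_self _ _
  · cases i with
    | inl u =>
        left
        have h1 : e.1 = u := hi
        rw [h1]
        exact degI_inl P u ▸ hd
    | inr v =>
        right
        have h1 : e.2 = v := hi
        rw [h1]
        exact degI_inr P v ▸ hd

lemma mem_greedy_of_low_deg {L1 L2 : List (Fin M × Fin M)} {e : Fin M × Fin M}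
    {i : Fin M ⊕ Fin M} (hi : Inc i e) (hd : degI (greedy k L1) i < k) :
    e ∈ greedy k (L1 ++ e :: L2) := by
  rw [greedy_append, List.foldl_cons]
  exact subset_foldl _ _ (mem_greedyStep_self hi hd)

lemma card_incident (i : Fin M ⊕ Fin M) :
    (Finset.univ.filter fun e : Fin M × Fin M => Inc i e).card = M := by
  cases i with
  | inl u =>
      have h : (Finset.univ.filter fun e : Fin M × Fin M => Inc (Sum.inl u) e)
          = {u} ×ˢ Finset.univ := by
        ext ⟨a, b⟩
        simp [Inc, eq_comm]
      rw [h, Finset.card_product]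
      simp
  | inr v =>
      have h : (Finset.univ.filter fun e : Fin M × Fin M => Inc (Sum.inr v) e)
          = Finset.univ ×ˢ {v} := by
        ext ⟨a, b⟩
        simp [Inc, eq_comm]
      rw [h, Finset.card_product]
      simp

lemma degI_greedy_ge {L : List (Fin M × Fin M)}
    (hcomplete : ∀ e : Fin M × Fin M, e ∈ L) (hk : k ≤ M) (i : Fin M ⊕ Fin M) :
    k ≤ degI (greedy k L) i := by
  by_contra hcon
  push_neg at hcon
  have hne : ¬ (Finset.univ.filter fun e : Fin M × Fin M => Inc i e)
      ⊆ ((greedy k L).filter fun e => Inc i e) := by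
    intro hsub
    have h1 := Finset.card_le_card hsub
    rw [card_incident] at h1
    have : degI (greedy k L) i < M := lt_of_lt_of_le hcon hk
    exact absurd h1 (not_le.2 this)
  obtain ⟨e, he, hne⟩ := Finset.not_subset.1 hne
  have hi : Inc i e := (Finset.mem_filter.1 he).2
  have heP : e ∉ greedy k L := fun hP => hne (Finset.mem_filter.2 ⟨hP, hi⟩)
  obtain ⟨L1, L2, hL⟩ := List.append_of_mem (hcomplete e)
  have hsub : greedy k L1 ⊆ greedy k L := by
    rw [hL]
    exact greedy_prefix_subset L1 (e :: L2)
  have hd : degI (greedy k L1) i < k := lt_of_le_of_lt (degI_mono hsub i) hcon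
  exact heP (hL ▸ mem_greedy_of_low_deg hi hd)


lemma card_filter_inc_of_exact {Q : Finset (Fin M × Fin M)} (hQ : IsExactPruning k Q)
    (i : Fin M ⊕ Fin M) : (Q.filter fun e => Inc i e).card = k := by
  cases i with
  | inl u => exact (degI_inl Q u).trans (hQ.1 u)
  | inr v => exact (degI_inr Q v).trans (hQ.2 v)

end GreedyAux

/-- Fix a vertex `i` of `K_{M,M}` and an exact pruning set `Q`.  Let
`B = e'_1, …, e'_{M/2}` be the edges of `Q` incident to `i` sorted in nondecreasing order
of weight, and let `A = e_1, …, e_{M/2}` be the first `M/2` edges incident to `i` that the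
greedy algorithm adds to `P`, in order of addition.  Then `w (e_n) ≤ w (e'_n)` for every
`n` with `1 ≤ n ≤ M/2`. -/




theorem greedy_pointwise_le (M : ℕ) (hM : 0 < M) (hMeven : Even M)
    (W : Matrix (Fin M) (Fin M) ℝ) (w : Fin M × Fin M → ℝ)
    (hw : ∀ e : Fin M × Fin M, w e = |W e.1 e.2|)
    (L : List (Fin M × Fin M)) (hnodup : L.Nodup)
    (hcomplete : ∀ e : Fin M × Fin M, e ∈ L)
    (hsorted : L.Pairwise fun a b => w a ≤ w b)
    (i : Fin M ⊕ Fin M)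
    (Q : Finset (Fin M × Fin M)) (hQ : IsExactPruning (M / 2) Q)
    (B : List (Fin M × Fin M))
    (hBperm : B.Perm (Q.filter fun e => Inc i e).toList)
    (hBsorted : B.Pairwise fun a b => w a ≤ w b) :
    (firstEdges (M / 2) L i).length = M / 2 ∧ B.length = M / 2 ∧
    ∀ (n : ℕ) (hA : n < (firstEdges (M / 2) L i).length) (hB : n < B.length),
      w ((firstEdges (M / 2) L i).get ⟨n, hA⟩) ≤ w (B.get ⟨n, hB⟩) := by
  classical
  set k := M / 2 with hkdef
  have hkM : k ≤ M := Nat.div_le_self _ _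
  set Pfull := greedy k L with hPdef
  set p : Fin M × Fin M → Bool := fun x => decide (Inc i x) && decide (x ∈ Pfull) with hpdef
  set A := L.filter p with hAdef
  have hfe : firstEdges k L i = A.take k := by
    unfold firstEdges addedList
    rw [List.filter_filter]
  have hAnodup : A.Nodup := hnodup.filter p
  have hAfin : A.toFinset = Pfull.filter fun e => Inc i e := by
    ext x
    simp only [hAdef, List.mem_toFinset, List.mem_filter, hpdef, Bool.and_eq_true,
      decide_eq_true_eq, Finset.mem_filter]
    constructor
    · rintro ⟨-, h1, h2⟩; exact ⟨h2, h1⟩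
    · rintro ⟨h2, h1⟩; exact ⟨hcomplete x, h1, h2⟩
  have hAlen : A.length = degI Pfull i := by
    rw [← List.toFinset_card_of_nodup hAnodup, hAfin]; rfl
  have hkA : k ≤ A.length := by
    rw [hAlen, hPdef]; exact degI_greedy_ge hcomplete hkM i
  have hlen1 : (firstEdges k L i).length = k := by
    rw [hfe, List.length_take]; omega
  have hBlen : B.length = k := by
    rw [hBperm.length_eq, Finset.length_toList]
    exact card_filter_inc_of_exact hQ i
  refine ⟨hlen1, hBlen, ?_⟩
  intro n hA hB
  have hnk : n < k := hlen1 ▸ hA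
  have hnA : n < A.length := lt_of_lt_of_le hnk hkA
  have hgeteq : (firstEdges k L i).get ⟨n, hA⟩ = A[n]'hnA := by
    rw [List.get_eq_getElem]
    simp only [hfe, List.getElem_take]
  rw [hgeteq, List.get_eq_getElem]
  by_contra hcon
  push_neg at hcon
  -- facts about e = A[n]
  have heA : A[n]'hnA ∈ A := List.getElem_mem _
  have heL : A[n]'hnA ∈ L := (List.mem_filter.1 heA).1
  have hpe : p (A[n]'hnA) = true := (List.mem_filter.1 heA).2
  have hpe' : Inc i (A[n]'hnA) ∧ A[n]'hnA ∈ Pfull := by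
    simpa [hpdef] using hpe
  have hie : Inc i (A[n]'hnA) := hpe'.1
  obtain ⟨L1, L2, hLsplit⟩ := List.append_of_mem heL
  have hndL : (L1 ++ A[n]'hnA :: L2).Nodup := hLsplit ▸ hnodup
  have hL1nodup : L1.Nodup := (List.nodup_append.1 hndL).1
  have hAsplit : A = L1.filter p ++ A[n]'hnA :: L2.filter p := by
    conv_lhs => rw [hAdef, hLsplit]
    rw [List.filter_append, List.filter_cons_of_pos hpe]
  have hF1lt : (L1.filter p).length < A.length := by
    rw [hAsplit, List.length_append]; simp
  have hF1get : A[(L1.filter p).length]'hF1lt = A[n]'hnA := by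
    rw [List.getElem_of_eq hAsplit hF1lt, List.getElem_append_right (le_refl _)]
    simp
  have hF1len : (L1.filter p).length = n := hAnodup.getElem_inj_iff.1 hF1get
  have hF1nodup : (L1.filter p).Nodup := hL1nodup.filter p
  -- degree of i after processing L1 equals n
  have hdegL1 : degI (greedy k L1) i = n := by
    have hset : ((greedy k L1).filter fun e => Inc i e) = (L1.filter p).toFinset := by
      ext x
      have hiff : x ∈ greedy k L1 ↔ x ∈ L1 ∧ x ∈ Pfull := by
        rw [hPdef, hLsplit]
        exact mem_greedy_prefix_iff hndL
      simp only [Finset.mem_filter, List.mem_toFinset, List.mem_filter, hpdef,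
        Bool.and_eq_true, decide_eq_true_eq, hiff]
      tauto
    unfold degI
    rw [hset, List.toFinset_card_of_nodup hF1nodup, hF1len]
  -- each of B[0], ..., B[n] belongs to L1.filter p
  have hkey : ∀ j, j < n + 1 → ∀ (hjB : j < B.length), B[j]'hjB ∈ L1.filter p := by
    intro j hj hjB
    have hxB : B[j]'hjB ∈ B := List.getElem_mem _
    have hxQ : B[j]'hjB ∈ Q.filter fun e => Inc i e :=
      Finset.mem_toList.1 (hBperm.subset hxB)
    have hxInc : Inc i (B[j]'hjB) := (Finset.mem_filter.1 hxQ).2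
    have hwx : w (B[j]'hjB) ≤ w (B[n]'hB) := by
      rcases eq_or_lt_of_le (Nat.lt_succ_iff.1 hj) with h | h
      · subst h; exact le_rfl
      · exact hBsorted.rel_get_of_lt (a := ⟨j, hjB⟩) (b := ⟨n, hB⟩) h
    have hwlt : w (B[j]'hjB) < w (A[n]'hnA) := lt_of_le_of_lt hwx hcon
    have hxL1 : B[j]'hjB ∈ L1 := by
      have hxL : B[j]'hjB ∈ L := hcomplete _
      rw [hLsplit] at hxL
      rcases List.mem_append.1 hxL with h | h
      · exact h
      · exfalso
        have hs2 : List.Pairwise (fun a b => w a ≤ w b) (A[n]'hnA :: L2) :=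
          (List.pairwise_append.1 (hLsplit ▸ hsorted)).2.1
        rcases List.mem_cons.1 h with h | h
        · rw [h] at hwlt; exact lt_irrefl _ hwlt
        · exact absurd (List.rel_of_pairwise_cons hs2 h) (not_le.2 hwlt)
    have hxP : B[j]'hjB ∈ Pfull := by
      obtain ⟨C1, C2, hC⟩ := List.append_of_mem hxL1
      have hsub : greedy k C1 ⊆ greedy k L1 := by
        rw [hC]; exact greedy_prefix_subset C1 _
      have hd : degI (greedy k C1) i < k := by
        have := degI_mono hsub i
        omega
      have hmem : B[j]'hjB ∈ greedy k (C1 ++ B[j]'hjB :: (C2 ++ A[n]'hnA :: L2)) :=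
        mem_greedy_of_low_deg hxInc hd
      have hLeq : L = C1 ++ B[j]'hjB :: (C2 ++ A[n]'hnA :: L2) := by
        rw [hLsplit, hC]; simp
      rw [hPdef, hLeq]
      exact hmem
    refine List.mem_filter.2 ⟨hxL1, ?_⟩
    simp [hpdef, hxInc, hxP]
  -- contradiction: n+1 distinct edges inside a list of length n
  have hSnodup : (B.take (n + 1)).Nodup :=
    (hBperm.nodup_iff.2 (Q.filter _).nodup_toList).sublist (List.take_sublist _ _)
  have hSsub : B.take (n + 1) ⊆ L1.filter p := by
    intro x hx
    obtain ⟨j, hjlen, hxe⟩ := List.mem_iff_getElem.1 hx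
    rw [List.length_take] at hjlen
    have hjn : j < n + 1 := lt_of_lt_of_le hjlen (min_le_left _ _)
    have hjB : j < B.length := lt_of_lt_of_le hjlen (min_le_right _ _)
    have := hkey j hjn hjB
    rw [List.getElem_take] at hxe
    exact hxe ▸ this
  have hlenle := (List.subperm_of_subset hSnodup hSsub).length_le
  rw [List.length_take, hF1len] at hlenle
  omega
end

section
/- The approximation factor 2 of the greedy algorithm is asymptotically tight: for every positive integer M there exist a nonnegative weight matrix on the complete bipartite graph K_{M,M} and an enumeration of its edges in nondecreasing order of weight such that the greedy algorithm with per-vertex requirement 1 (add the current edge if and only if at least one of its endpoints is currently incident to no chosen edge) outputs an edge set of total weight 2M − 1, while the minimum total weight of a perfect matching (a set of edges with every vertex incident to exactly one edge) equals M. Consequently the achieved ratio is (2M − 1)/M, which converges to 2 as M → ∞. -/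
lemma degR_insert_ne {M : ℕ} (P : Finset (Fin M × Fin M)) (e : Fin M × Fin M) (v : Fin M)
    (h : ¬ e.2 = v) : degR (insert e P) v = degR P v := by
  unfold degR; rw [Finset.filter_insert, if_neg h]

lemma degL_insert_ne {M : ℕ} (P : Finset (Fin M × Fin M)) (e : Fin M × Fin M) (u : Fin M)
    (h : ¬ e.1 = u) : degL (insert e P) u = degL P u := by
  unfold degL; rw [Finset.filter_insert, if_neg h]

lemma phase1 {M : ℕ} (u0 : Fin M) (l : List (Fin M)) :
    l.Nodup → ∀ P : Finset (Fin M × Fin M), (∀ j ∈ l, degR P j = 0) →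
    List.foldl (greedyStep 1) P (l.map fun j => (u0, j))
      = P ∪ (l.map fun j => (u0, j)).toFinset := by
  induction l with
  | nil => intro _ P _; simp
  | cons j t ih =>
    intro hn P h
    simp only [List.map_cons, List.foldl_cons]
    have hstep : greedyStep 1 P (u0, j) = insert (u0, j) P := by
      unfold greedyStep
      rw [if_pos]
      right
      rw [h j (List.mem_cons_self)]; exact one_pos
    rw [hstep, ih (List.nodup_cons.1 hn).2]
    · simp [Finset.insert_union, Finset.union_insert]
    · intro j' hj'
      have hne : ¬ ((u0, j) : Fin M × Fin M).2 = j' := by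
        intro hjj
        simp only at hjj
        subst hjj
        exact (List.nodup_cons.1 hn).1 hj'
      rw [degR_insert_ne _ _ _ hne]
      exact h j' (List.mem_cons_of_mem _ hj')

lemma phase2 {M : ℕ} (v0 : Fin M) (l : List (Fin M)) :
    l.Nodup → ∀ P : Finset (Fin M × Fin M), (∀ i ∈ l, degL P i = 0) →
    List.foldl (greedyStep 1) P (l.map fun i => (i, v0))
      = P ∪ (l.map fun i => (i, v0)).toFinset := by
  induction l with
  | nil => intro _ P _; simp
  | cons j t ih =>
    intro hn P h
    simp only [List.map_cons, List.foldl_cons]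
    have hstep : greedyStep 1 P (j, v0) = insert (j, v0) P := by
      unfold greedyStep
      rw [if_pos]
      left
      rw [h j (List.mem_cons_self)]; exact one_pos
    rw [hstep, ih (List.nodup_cons.1 hn).2]
    · simp [Finset.insert_union, Finset.union_insert]
    · intro j' hj'
      have hne : ¬ ((j, v0) : Fin M × Fin M).1 = j' := by
        intro hjj
        simp only at hjj
        subst hjj
        exact (List.nodup_cons.1 hn).1 hj'
      rw [degL_insert_ne _ _ _ hne]
      exact h j' (List.mem_cons_of_mem _ hj')

lemma phase3 {M : ℕ} (l : List (Fin M × Fin M)) (P : Finset (Fin M × Fin M))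
    (h : ∀ e ∈ l, 1 ≤ degL P e.1 ∧ 1 ≤ degR P e.2) :
    List.foldl (greedyStep 1) P l = P := by
  induction l with
  | nil => rfl
  | cons e t ih =>
    simp only [List.foldl_cons]
    have hstep : greedyStep 1 P e = P := by
      unfold greedyStep
      rw [if_neg]
      push_neg
      exact h e (List.mem_cons_self)
    rw [hstep]
    exact ih fun e' he' => h e' (List.mem_cons_of_mem _ he')

lemma pairwise_of_total {α : Type*} {r : α → α → Prop} (h : ∀ a b, r a b) (l : List α) :
    l.Pairwise r := by
  induction l with
  | nil => exact List.Pairwise.nil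
  | cons a t ih => exact List.Pairwise.cons (fun b _ => h a b) ih

/-- The approximation factor 2 of the greedy algorithm is asymptotically
tight: for every positive integer `M` there exist nonnegative edge weights `w` on
`K_{M,M}` and an enumeration `L` of its edges in nondecreasing order of weight such that
the greedy algorithm with per-vertex requirement `1` outputs an edge set of total weight
`2M − 1`, while the minimum total weight of a perfect matching (an edge set in which every
vertex is incident to exactly one edge) equals `M`.  The achieved ratio `(2M − 1)/M`
converges to `2` as `M → ∞`. -/
theorem greedy_ratio_tight (M : ℕ) (hM : 0 < M) :
    ∃ (w : Fin M × Fin M → ℝ) (L : List (Fin M × Fin M)),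
      (∀ e : Fin M × Fin M, 0 ≤ w e) ∧
      L.Nodup ∧ (∀ e : Fin M × Fin M, e ∈ L) ∧
      (L.Pairwise fun a b => w a ≤ w b) ∧
      (∑ e ∈ greedy 1 L, w e) = 2 * (M : ℝ) - 1 ∧
      IsLeast {x : ℝ | ∃ Q : Finset (Fin M × Fin M),
        IsExactPruning 1 Q ∧ x = ∑ e ∈ Q, w e} (M : ℝ) ∧
      Filter.Tendsto (fun m : ℕ => (2 * (m : ℝ) - 1) / m)
        Filter.atTop (nhds 2) := by
  set z : Fin M := ⟨0, hM⟩ with hz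
  set l1 : List (Fin M × Fin M) := (List.finRange M).map (fun j => (z, j)) with hl1
  set l2 : List (Fin M × Fin M) :=
    ((List.finRange M).filter (fun i => i ≠ z)).map (fun i => (i, z)) with hl2
  set l3 : List (Fin M × Fin M) :=
    ((List.finRange M).product (List.finRange M)).filter
      (fun e => e.1 ≠ z ∧ e.2 ≠ z) with hl3
  refine ⟨fun _ => 1, l1 ++ l2 ++ l3, fun _ => zero_le_one, ?_, ?_, ?_, ?_, ?_, ?_⟩
  · -- Nodup
    have h1 : l1.Nodup := (List.nodup_finRange M).map (fun a b h => by
      simpa using congrArg Prod.snd h)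
    have h2 : l2.Nodup := ((List.nodup_finRange M).filter _).map (fun a b h => by
      simpa using congrArg Prod.fst h)
    have h3 : l3.Nodup :=
      ((List.nodup_finRange M).product (List.nodup_finRange M)).filter _
    rw [List.nodup_append, List.nodup_append]
    refine ⟨⟨h1, h2, ?_⟩, h3, ?_⟩
    · intro e he1 b he2 hb; subst hb
      simp only [hl1, hl2, List.mem_map, List.mem_filter] at he1 he2
      rcases he1 with ⟨j, _, rfl⟩
      rcases he2 with ⟨i, ⟨_, hi⟩, hie⟩
      have : i = z := congrArg Prod.fst hie
      simp [this] at hi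
    · intro e he1 b he3 hb; subst hb
      simp only [hl3, List.mem_filter] at he3
      rcases he3 with ⟨_, he3⟩
      simp only [hl1, hl2, List.mem_append, List.mem_map, List.mem_filter] at he1
      rcases he1 with ⟨j, _, rfl⟩ | ⟨i, _, rfl⟩
      · simp at he3
      · simp at he3
  · -- completeness
    intro e
    by_cases h1 : e.1 = z
    · apply List.mem_append_left; apply List.mem_append_left
      simp only [hl1, List.mem_map]
      exact ⟨e.2, List.mem_finRange _, by rw [← h1]⟩
    · by_cases h2 : e.2 = z
      · apply List.mem_append_left; apply List.mem_append_right
        simp only [hl2, List.mem_map, List.mem_filter]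
        exact ⟨e.1, ⟨List.mem_finRange _, by simpa using h1⟩, by rw [← h2]⟩
      · apply List.mem_append_right
        simp only [hl3, List.mem_filter]
        refine ⟨?_, by simpa using And.intro h1 h2⟩
        exact List.pair_mem_product.2 ⟨List.mem_finRange _, List.mem_finRange _⟩
  · -- sorted
    exact pairwise_of_total (fun _ _ => le_rfl) _
  · -- greedy sum
    have hg : greedy 1 (l1 ++ l2 ++ l3) = l1.toFinset ∪ l2.toFinset := by
      unfold greedy
      rw [List.foldl_append, List.foldl_append]
      have s1 : List.foldl (greedyStep 1) ∅ l1 = l1.toFinset := by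
        rw [hl1, phase1 z _ (List.nodup_finRange M) ∅ (fun j _ => by simp [degR])]
        simp
      rw [s1]
      have s2 : List.foldl (greedyStep 1) l1.toFinset l2 = l1.toFinset ∪ l2.toFinset := by
        rw [hl2, phase2 z _ ((List.nodup_finRange M).filter _) _ ?_]
        intro i hi
        rw [List.mem_filter] at hi
        have hiz : ¬ i = z := by simpa using hi.2
        unfold degL
        rw [Finset.card_eq_zero, Finset.filter_eq_empty_iff]
        intro e he
        rw [hl1, List.mem_toFinset, List.mem_map] at he
        rcases he with ⟨j, _, rfl⟩
        simpa using fun h => hiz h.symm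
      rw [s2]
      apply phase3
      intro e he
      rw [hl3, List.mem_filter] at he
      have he1 : ¬ e.1 = z := by have := he.2; simp at this; exact this.1
      have he2 : ¬ e.2 = z := by have := he.2; simp at this; exact this.2
      constructor
      · apply Nat.one_le_iff_ne_zero.2
        unfold degL
        rw [Ne, Finset.card_eq_zero, ← Ne, ← Finset.nonempty_iff_ne_empty]
        refine ⟨(e.1, z), Finset.mem_filter.2 ⟨?_, rfl⟩⟩
        apply Finset.mem_union_right
        rw [hl2, List.mem_toFinset, List.mem_map]
        exact ⟨e.1, List.mem_filter.2 ⟨List.mem_finRange _, by simpa using he1⟩, rfl⟩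
      · apply Nat.one_le_iff_ne_zero.2
        unfold degR
        rw [Ne, Finset.card_eq_zero, ← Ne, ← Finset.nonempty_iff_ne_empty]
        refine ⟨(z, e.2), Finset.mem_filter.2 ⟨?_, rfl⟩⟩
        apply Finset.mem_union_left
        rw [hl1, List.mem_toFinset, List.mem_map]
        exact ⟨e.2, List.mem_finRange _, rfl⟩
    rw [hg, Finset.sum_const, nsmul_eq_mul, mul_one]
    have hdisj : Disjoint l1.toFinset l2.toFinset := by
      rw [Finset.disjoint_left]
      intro e he1 he2
      rw [hl1, List.mem_toFinset, List.mem_map] at he1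
      rw [hl2, List.mem_toFinset, List.mem_map] at he2
      rcases he1 with ⟨j, _, rfl⟩
      rcases he2 with ⟨i, hi, hie⟩
      rw [List.mem_filter] at hi
      have : i = z := congrArg Prod.fst hie
      rw [this] at hi
      simpa using hi.2
    rw [Finset.card_union_of_disjoint hdisj]
    have c1 : l1.toFinset.card = M := by
      rw [List.toFinset_card_of_nodup ((List.nodup_finRange M).map (fun a b h => by
        simpa using congrArg Prod.snd h))]
      simp [hl1]
    have c2 : l2.toFinset.card = M - 1 := by
      rw [List.toFinset_card_of_nodup (((List.nodup_finRange M).filter _).map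
        (fun a b h => by simpa using congrArg Prod.fst h))]
      rw [List.length_map]
      have : ((List.finRange M).filter (fun i => i ≠ z)).length
          = ((List.finRange M).filter (fun i => i ≠ z)).toFinset.card :=
        (List.toFinset_card_of_nodup ((List.nodup_finRange M).filter _)).symm
      rw [this]
      have : ((List.finRange M).filter (fun i => i ≠ z)).toFinset
          = Finset.univ.erase z := by
        ext i
        simp only [List.mem_toFinset, List.mem_filter, List.mem_finRange, decide_eq_true_eq,
          Finset.mem_erase, Finset.mem_univ, and_true, true_and]
      rw [this, Finset.card_erase_of_mem (Finset.mem_univ z), Finset.card_univ, Fintype.card_fin]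
    rw [c1, c2]
    have h1M : (1 : ℕ) ≤ M := hM
    push_cast [Nat.cast_sub h1M]
    ring
  · -- IsLeast
    constructor
    · refine ⟨Finset.univ.image (fun i : Fin M => (i, i)), ⟨?_, ?_⟩, ?_⟩
      · intro u
        unfold degL
        have : (Finset.univ.image (fun i : Fin M => (i, i))).filter (fun e => e.1 = u)
            = {(u, u)} := by
          ext e
          simp only [Finset.mem_filter, Finset.mem_image, Finset.mem_univ, true_and,
            Finset.mem_singleton]
          constructor
          · rintro ⟨⟨i, rfl⟩, h⟩; simp only at h; rw [h]
          · rintro rfl; exact ⟨⟨u, rfl⟩, rfl⟩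
        rw [this, Finset.card_singleton]
      · intro v
        unfold degR
        have : (Finset.univ.image (fun i : Fin M => (i, i))).filter (fun e => e.2 = v)
            = {(v, v)} := by
          ext e
          simp only [Finset.mem_filter, Finset.mem_image, Finset.mem_univ, true_and,
            Finset.mem_singleton]
          constructor
          · rintro ⟨⟨i, rfl⟩, h⟩; simp only at h; rw [h]
          · rintro rfl; exact ⟨⟨v, rfl⟩, rfl⟩
        rw [this, Finset.card_singleton]
      · rw [Finset.sum_const, nsmul_eq_mul, mul_one,
          Finset.card_image_of_injective _ (fun a b h => by simpa using congrArg Prod.fst h)]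
        simp
    · rintro x ⟨Q, ⟨hL, _⟩, rfl⟩
      rw [Finset.sum_const, nsmul_eq_mul, mul_one]
      have hcard : Q.card = ∑ u : Fin M, degL Q u := by
        unfold degL
        exact Finset.card_eq_sum_card_fiberwise (f := Prod.fst)
          (fun (e : Fin M × Fin M) _ => Finset.mem_univ e.1)
      rw [hcard]
      simp [hL]
  · -- tendsto
    have h : Filter.Tendsto (fun m : ℕ => 2 - (m : ℝ)⁻¹) Filter.atTop (nhds 2) := by
      have := tendsto_const_nhds (x := (2 : ℝ)) (f := Filter.atTop (α := ℕ))
      simpa using this.sub tendsto_inv_atTop_nhds_zero_nat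
    apply h.congr'
    filter_upwards [Filter.eventually_ge_atTop 1] with m hm
    have hm0 : (m : ℝ) ≠ 0 := by positivity
    field_simp
end
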